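/- Let M be an infinitely generated right module over a right perfect ring R. Then there exist a simple right R-module S and a submodule N of M such that M/N is isomorphic to the countably infinite direct sum S^(ω); consequently M is not super Bassian. -/

import Mathlib

/-- A module `M` is *Bassian* if every monomorphism `M → M/N` forces `N = 0`. -/
def IsBassian (R : Type*) [Ring R] (M : Type*) [AddCommGroup M] [Module R M] : Prop :=
  ∀ N : Submodule R M, (∃ f : M →ₗ[R] M ⧸ N, Function.Injective f) → N = ⊥

/-- A module `M` is *super Bassian* if every quotient of `M` is Bassian. -/
def IsSuperBassian (R : Type*) [Ring R] (M : Type*) [AddCommGroup M] [Module R M] : Prop :=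
  ∀ K : Submodule R M, IsBassian R (M ⧸ K)

/-- A module `M` is *hereditarily Bassian* if every submodule of `M` is Bassian. -/
def IsHereditarilyBassian (R : Type*) [Ring R] (M : Type*) [AddCommGroup M] [Module R M] :
    Prop :=
  ∀ N : Submodule R M, IsBassian R N

/-- A (left) ideal `I` is left T-nilpotent if every sequence of its elements has a
vanishing iterated product. -/
def IsTNilpotentIdeal {R : Type*} [Ring R] (I : Ideal R) : Prop :=
  ∀ a : ℕ → R, (∀ n, a n ∈ I) → ∃ n : ℕ, ((List.range (n + 1)).map a).prod = 0

lemma tnilpotent_no_smul_top {R : Type*} [Ring R] {J : Ideal R}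
    (htn : IsTNilpotentIdeal J) (Q : Type*) [AddCommGroup Q] [Module R Q] [Nontrivial Q]
    (hQ : (J • ⊤ : Submodule R Q) = ⊤) : False := by
  classical
  obtain ⟨q, hq⟩ := exists_ne (0 : Q)
  set step : R → R := fun x =>
    if h : ∃ a, a ∈ J ∧ ∃ m : Q, (x * a) • m ≠ 0 then h.choose else 0 with hstep
  let P : ℕ → R := fun n => Nat.rec 1 (fun _ p => p * step p) n
  have hP0 : P 0 = 1 := rfl
  have hPs : ∀ n, P (n + 1) = P n * step (P n) := fun n => rfl
  have key : ∀ x : R, (∃ m : Q, x • m ≠ 0) → ∃ a, a ∈ J ∧ ∃ m : Q, (x * a) • m ≠ 0 := by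
    intro x ⟨m, hm⟩
    have hmem : m ∈ (J • ⊤ : Submodule R Q) := by rw [hQ]; exact Submodule.mem_top
    refine Submodule.smul_induction_on hmem ?_ ?_ hm
    · intro r hr n _ h
      exact ⟨r, hr, n, by rwa [mul_smul]⟩
    · intro x₁ x₂ h1 h2 h
      rcases (by by_contra hc; push_neg at hc; simp [smul_add, hc.1, hc.2] at h :
          x • x₁ ≠ 0 ∨ x • x₂ ≠ 0) with h' | h'
      · exact h1 h'
      · exact h2 h'
  have hstep' : ∀ x, (∃ a ∈ J, ∃ m : Q, (x * a) • m ≠ 0) →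
      step x ∈ J ∧ ∃ m : Q, (x * step x) • m ≠ 0 := by
    intro x h
    simp only [hstep]
    rw [dif_pos h]
    exact ⟨h.choose_spec.1, h.choose_spec.2⟩
  have claim : ∀ n, ∃ m : Q, P n • m ≠ 0 := by
    intro n
    induction n with
    | zero => exact ⟨q, by simpa [hP0] using hq⟩
    | succ n ih =>
      rw [hPs]
      exact (hstep' (P n) (key (P n) ih)).2
  have amem : ∀ n, step (P n) ∈ J := by
    intro n
    exact (hstep' (P n) (key (P n) (claim n))).1
  obtain ⟨n, hn⟩ := htn (fun n => step (P n)) amem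
  have hprod : ∀ n, ((List.range (n + 1)).map fun k => step (P k)).prod = P (n + 1) := by
    intro n
    induction n with
    | zero =>
      rw [List.range_succ]
      have h1 : P 1 = P 0 * step (P 0) := rfl
      simp [h1, hP0]
    | succ n ih =>
      rw [List.range_succ, List.map_append, List.prod_append, ih]
      simp [hPs]
  obtain ⟨m, hm⟩ := claim (n + 1)
  rw [hprod] at hn
  exact hm (by rw [hn, zero_smul])

lemma not_finite_quotient_radical_smul {R : Type*} [Ring R] {J : Ideal R}
    (htn : IsTNilpotentIdeal J) {M : Type*} [AddCommGroup M] [Module R M]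
    (hM : ¬ Module.Finite R M) :
    ¬ Module.Finite R (M ⧸ (J • ⊤ : Submodule R M)) := by
  classical
  intro hfin
  set K : Submodule R M := J • ⊤ with hK
  obtain ⟨t, ht⟩ : (⊤ : Submodule R (M ⧸ K)).FG := Module.finite_def.mp hfin
  choose lift hlift using fun x : (t : Set (M ⧸ K)) => K.mkQ_surjective x.1
  set N : Submodule R M := Submodule.span R (Set.range lift) with hN
  have hNK : K ⊔ N = ⊤ := by
    rw [← Submodule.map_mkQ_eq_top]
    rw [hN, Submodule.map_span]
    have himg : K.mkQ '' Set.range lift = (t : Set (M ⧸ K)) := by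
      apply Set.eq_of_subset_of_subset
      · rintro y ⟨z, ⟨x, rfl⟩, rfl⟩
        rw [hlift x]
        exact x.2
      · intro y hy
        exact ⟨lift ⟨y, hy⟩, ⟨⟨y, hy⟩, rfl⟩, hlift ⟨y, hy⟩⟩
    rw [himg, ht]
  -- the quotient by N is killed by J-smul
  have hQtop : (J • ⊤ : Submodule R (M ⧸ N)) = ⊤ := by
    have h1 : Submodule.map N.mkQ (J • ⊤ : Submodule R M) = (J • ⊤ : Submodule R (M ⧸ N)) := by
      rw [Submodule.map_smul'', Submodule.map_top, Submodule.range_mkQ]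
    have h2 : Submodule.map N.mkQ N = ⊥ := Submodule.mkQ_map_self N
    calc (J • ⊤ : Submodule R (M ⧸ N)) = Submodule.map N.mkQ K := by rw [h1]
    _ = Submodule.map N.mkQ N ⊔ Submodule.map N.mkQ K := by rw [h2, bot_sup_eq]
    _ = Submodule.map N.mkQ (N ⊔ K) := (Submodule.map_sup _ _ _).symm
    _ = ⊤ := by rw [sup_comm, hNK, Submodule.map_top, Submodule.range_mkQ]
  have hsub : Subsingleton (M ⧸ N) := by
    by_contra hns
    have : Nontrivial (M ⧸ N) := not_subsingleton_iff_nontrivial.mp hns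
    exact tnilpotent_no_smul_top htn (M ⧸ N) hQtop
  have hNtop : N = ⊤ := Submodule.Quotient.subsingleton_iff.mp hsub
  apply hM
  refine Module.finite_def.mpr ?_
  rw [← hNtop, hN]
  exact Submodule.fg_span (Set.finite_range lift)

lemma fg_of_isSimpleModule {R : Type*} [Ring R] {M : Type*} [AddCommGroup M] [Module R M]
    (m : Submodule R M) (h : IsSimpleModule R m) : m.FG := by
  haveI := h
  haveI : Nontrivial m := IsSimpleModule.nontrivial R m
  obtain ⟨x, hx⟩ := exists_ne (0 : m)
  refine ⟨{(x : M)}, ?_⟩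
  have h1 : Submodule.span R {x} = (⊤ : Submodule R m) :=
    IsSimpleModule.span_singleton_eq_top R hx
  have h2 : Submodule.map m.subtype (Submodule.span R {x}) = Submodule.span R {(x : M)} := by
    rw [Submodule.map_span, Set.image_singleton]; rfl
  simp only [Finset.coe_singleton]
  rw [← h2, h1, Submodule.map_top, Submodule.range_subtype]

universe u v

set_option maxHeartbeats 1000000 in
set_option synthInstance.maxHeartbeats 200000 in
/-- Over a perfect ring (`R/J(R)` semisimple and `J(R)` T-nilpotent), every infinitely
generated module has a quotient isomorphic to `S^(ω)` for a simple module `S`;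
consequently it is not super Bassian. -/
theorem perfect_infinitely_generated (R : Type u) [Ring R] (M : Type v) [AddCommGroup M]
    [Module R M]
    (hss : IsSemisimpleModule R (R ⧸ (⊥ : Ideal R).jacobson))
    (htn : IsTNilpotentIdeal ((⊥ : Ideal R).jacobson))
    (hM : ¬ Module.Finite R M) :
    (∃ (S : ModuleCat.{v} R) (N : Submodule R M),
        IsSimpleModule R S ∧ Nonempty ((M ⧸ N) ≃ₗ[R] DirectSum ℕ fun _ => S)) ∧
      ¬ IsSuperBassian R M := by
  classical
  set J : Ideal R := (⊥ : Ideal R).jacobson with hJ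
  set K : Submodule R M := J • ⊤ with hK
  haveI hssR : IsSemisimpleModule R (R ⧸ J) := hss
  have hMb : ¬ Module.Finite R (M ⧸ K) := not_finite_quotient_radical_smul htn hM
  -- J kills M ⧸ K
  have hannK : (J • (⊤ : Submodule R (M ⧸ K))) = ⊥ := by
    have h1 : Submodule.map K.mkQ (J • ⊤ : Submodule R M) = (J • ⊤ : Submodule R (M ⧸ K)) := by
      rw [Submodule.map_smul'', Submodule.map_top, Submodule.range_mkQ]
    rw [← h1, ← hK]
    exact Submodule.mkQ_map_self K
  have hann : ∀ a ∈ J, ∀ x : M ⧸ K, a • x = 0 := by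
    intro a ha x
    have : a • x ∈ (J • (⊤ : Submodule R (M ⧸ K))) := Submodule.smul_mem_smul ha Submodule.mem_top
    rwa [hannK, Submodule.mem_bot] at this
  -- M ⧸ K is semisimple
  haveI hssMb : IsSemisimpleModule R (M ⧸ K) := by
    apply isSemisimpleModule_of_isSemisimpleModule_submodule'
      (p := fun x : M ⧸ K => Submodule.span R {x})
    · intro x
      have hker : (J : Submodule R R) ≤ LinearMap.ker (LinearMap.toSpanSingleton R (M ⧸ K) x) := by
        intro a ha
        rw [LinearMap.mem_ker, LinearMap.toSpanSingleton_apply]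
        exact hann a ha x
      have hr : LinearMap.range (J.liftQ (LinearMap.toSpanSingleton R (M ⧸ K) x) hker)
          = Submodule.span R {x} := by
        rw [Submodule.range_liftQ, ← LinearMap.span_singleton_eq_range]
      have := IsSemisimpleModule.range (J.liftQ (LinearMap.toSpanSingleton R (M ⧸ K) x) hker)
      rwa [hr] at this
    · rw [eq_top_iff]
      intro x _
      exact Submodule.mem_iSup_of_mem x (Submodule.mem_span_singleton_self x)
  -- decompose M ⧸ K into simples
  obtain ⟨s, hind, hsup, hsimp⟩ :=
    IsSemisimpleModule.exists_sSupIndep_sSup_simples_eq_top R (M ⧸ K)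
  have hs_inf : s.Infinite := by
    by_contra hsf
    rw [Set.not_infinite] at hsf
    apply hMb
    refine Module.finite_def.mpr ?_
    have hfg : (hsf.toFinset.sup id).FG := by
      refine Finset.sup_induction Submodule.fg_bot (fun a ha b hb => Submodule.FG.sup ha hb) ?_
      intro m hm
      exact fg_of_isSimpleModule m (hsimp m (by simpa using hm))
    rwa [Finset.sup_id_eq_sSup, hsf.coe_toFinset, hsup] at hfg
  haveI : Infinite ↥s := hs_inf.to_subtype
  have hInt : DirectSum.IsInternal (fun i : s => (i : Submodule R (M ⧸ K))) := by
    rw [DirectSum.isInternal_submodule_iff_iSupIndep_and_iSup_eq_top]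
    exact ⟨(sSupIndep_iff s).mp hind, by rw [← sSup_eq_iSup']; exact hsup⟩
  -- finitely many simple "types": decompose R ⧸ J
  haveI : Module.Finite R (R ⧸ J) :=
    Module.Finite.of_surjective (Submodule.mkQ (J : Submodule R R)) (Submodule.mkQ_surjective _)
  have hcomp : IsCompactElement (⊤ : Submodule R (R ⧸ J)) :=
    (Submodule.fg_iff_compact _).mp (Module.finite_def.mp inferInstance)
  obtain ⟨tfin, htsub, htle⟩ :=
    (CompleteLattice.isCompactElement_iff_exists_le_sSup_of_le_sSup _ _).mp hcomp {m : Submodule R (R ⧸ J) | IsSimpleModule R m}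
    (IsSemisimpleModule.sSup_simples_eq_top R (R ⧸ J)).ge
  have classify : ∀ i : s, ∃ T ∈ tfin, Nonempty ((↥(i : Submodule R (M ⧸ K))) ≃ₗ[R] ↥T) := by
    intro i
    haveI hσ : IsSimpleModule R ↥(i : Submodule R (M ⧸ K)) := hsimp _ i.2
    haveI : Nontrivial ↥(i : Submodule R (M ⧸ K)) := IsSimpleModule.nontrivial R _
    obtain ⟨x, hx⟩ := exists_ne (0 : ↥(i : Submodule R (M ⧸ K)))
    have hker : (J : Submodule R R) ≤
        LinearMap.ker (LinearMap.toSpanSingleton R (↥(i : Submodule R (M ⧸ K))) x) := by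
      intro a ha
      rw [LinearMap.mem_ker, LinearMap.toSpanSingleton_apply]
      exact Subtype.ext (by simpa using hann a ha (x : M ⧸ K))
    set f := J.liftQ (LinearMap.toSpanSingleton R _ x) hker with hf
    have hfs : Function.Surjective f := by
      have hr : LinearMap.range f = ⊤ := by
        rw [hf, Submodule.range_liftQ,
          LinearMap.range_eq_top.mpr (IsSimpleModule.toSpanSingleton_surjective R hx)]
      exact LinearMap.range_eq_top.mp hr
    have hex : ∃ T ∈ tfin, f.domRestrict T ≠ 0 := by
      by_contra hall
      push_neg at hall
      have hker' : tfin.sup id ≤ LinearMap.ker f := by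
        refine Finset.sup_le fun T hT => ?_
        intro y hy
        have h0 : f.domRestrict T ⟨y, hy⟩ = 0 := by rw [hall T hT]; rfl
        simpa [LinearMap.domRestrict_apply] using h0
      have hkt : LinearMap.ker f = ⊤ := top_unique (le_trans htle hker')
      obtain ⟨w, hw⟩ := hfs x
      apply hx
      rw [← hw]
      have : w ∈ LinearMap.ker f := hkt ▸ Submodule.mem_top
      simpa using this
    obtain ⟨T, hTmem, hTne⟩ := hex
    haveI : IsSimpleModule R ↥T := htsub hTmem
    have hbij := (f.domRestrict T).bijective_or_eq_zero.resolve_right hTne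
    exact ⟨T, hTmem, ⟨(LinearEquiv.ofBijective _ hbij).symm⟩⟩
  choose cT cmem ciso using classify
  let c : ↥s → {T // T ∈ tfin} := fun i => ⟨cT i, cmem i⟩
  obtain ⟨j₀, hj₀⟩ := Finite.exists_infinite_fiber c
  obtain ⟨idx, hidx_inj, hfib⟩ : ∃ f : ℕ → ↥s, Function.Injective f ∧ ∀ n, c (f n) = j₀ := by
    haveI : Infinite ↥(c ⁻¹' {j₀}) := hj₀
    let e' : ℕ ↪ ↥(c ⁻¹' {j₀}) := Infinite.natEmbedding _
    exact ⟨fun n => ((e' n : ↥(c ⁻¹' {j₀})) : ↥s),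
      fun a b h => e'.injective (Subtype.ext h), fun n => (e' n).2⟩
  have hcc : ∀ n, cT (idx n) = cT (idx 0) := fun n =>
    congrArg Subtype.val ((hfib n).trans (hfib 0).symm)
  let Sfix : Type v := ↥((idx 0 : ↥s) : Submodule R (M ⧸ K))
  have isos : ∀ n, Nonempty ((↥((idx n : ↥s) : Submodule R (M ⧸ K))) ≃ₗ[R] Sfix) := by
    intro n
    exact ⟨((ciso (idx n)).some.trans (LinearEquiv.ofEq _ _ (hcc n))).trans
      (ciso (idx 0)).some.symm⟩
  have isos' : ∀ i : ↥s, (∃ n, idx n = i) →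
      Nonempty ((↥(i : Submodule R (M ⧸ K))) ≃ₗ[R] Sfix) := by
    rintro i ⟨n, rfl⟩
    exact isos n
  let D := DirectSum ℕ (fun _ : ℕ => Sfix)
  let φ : ∀ i : ↥s, (↥(i : Submodule R (M ⧸ K))) →ₗ[R] D := fun i =>
    if h : ∃ n, idx n = i then
      (DirectSum.lof R ℕ (fun _ => Sfix) h.choose).comp (isos' i h).some.toLinearMap
    else 0
  have hφ : ∀ n (y : ↥((idx n : ↥s) : Submodule R (M ⧸ K))), φ (idx n) y
      = DirectSum.lof R ℕ (fun _ => Sfix) n ((isos' (idx n) ⟨n, rfl⟩).some y) := by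
    intro n y
    have h : ∃ m, idx m = idx n := ⟨n, rfl⟩
    have hch : h.choose = n := hidx_inj h.choose_spec
    simp only [φ]
    rw [dif_pos h]
    simp only [LinearMap.comp_apply, LinearEquiv.coe_toLinearMap]
    rw [hch]
  let π : (DirectSum ↥s fun i : ↥s => ↥(i : Submodule R (M ⧸ K))) →ₗ[R] D :=
    DirectSum.toModule R ↥s D φ
  have hπlof : ∀ n (x : Sfix),
      DirectSum.lof R ℕ (fun _ => Sfix) n x ∈ LinearMap.range π := by
    intro n x
    refine ⟨DirectSum.lof R ↥s _ (idx n) ((isos' (idx n) ⟨n, rfl⟩).some.symm x), ?_⟩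
    rw [DirectSum.toModule_lof, hφ n, LinearEquiv.apply_symm_apply]
  have hπsurj : Function.Surjective π := by
    intro z
    refine DirectSum.induction_on z ⟨0, map_zero π⟩ (fun n x => ?_)
      (fun x y hx hy => ?_)
    · rw [← DirectSum.lof_eq_of R]
      exact hπlof n x
    · obtain ⟨a, ha⟩ := hx
      obtain ⟨b, hb⟩ := hy
      exact ⟨a + b, by rw [map_add, ha, hb]⟩
  let gEq := LinearEquiv.ofBijective
    (DirectSum.coeLinearMap (fun i : s => (i : Submodule R (M ⧸ K)))) hInt
  let total : M →ₗ[R] D := (π.comp gEq.symm.toLinearMap).comp K.mkQ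
  have htot : Function.Surjective total :=
    hπsurj.comp (gEq.symm.surjective.comp (Submodule.mkQ_surjective K))
  let N : Submodule R M := LinearMap.ker total
  let eqv : (M ⧸ N) ≃ₗ[R] D := total.quotKerEquivOfSurjective htot
  haveI hSfix_simple : IsSimpleModule R Sfix := hsimp _ (idx 0).2
  haveI : Nontrivial Sfix := IsSimpleModule.nontrivial R _
  -- the shift machinery on D
  let sh : D →ₗ[R] D := DirectSum.toModule R ℕ D
    (fun n => DirectSum.lof R ℕ (fun _ => Sfix) (n + 1))
  let unsh : D →ₗ[R] D := DirectSum.toModule R ℕ D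
    (fun n => Nat.casesOn n 0 fun m => DirectSum.lof R ℕ (fun _ => Sfix) m)
  have hsh_lof : ∀ n x, sh (DirectSum.lof R ℕ (fun _ => Sfix) n x)
      = DirectSum.lof R ℕ (fun _ => Sfix) (n + 1) x := by
    intro n x
    simp only [sh]
    rw [DirectSum.toModule_lof]
  have hunsh_lof : ∀ n x, unsh (DirectSum.lof R ℕ (fun _ => Sfix) (n + 1) x)
      = DirectSum.lof R ℕ (fun _ => Sfix) n x := by
    intro n x
    simp only [unsh]
    rw [DirectSum.toModule_lof]
  have hunsh0 : ∀ x, unsh (DirectSum.lof R ℕ (fun _ => Sfix) 0 x) = 0 := by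
    intro x
    simp only [unsh]
    rw [DirectSum.toModule_lof]
    rfl
  have hus : unsh.comp sh = LinearMap.id := by
    refine DirectSum.linearMap_ext R fun n => ?_
    ext x
    simp only [LinearMap.comp_apply, LinearMap.id_apply]
    rw [hsh_lof, hunsh_lof]
  have hls : ∀ x, unsh (sh x) = x := fun x => by
    rw [← LinearMap.comp_apply, hus, LinearMap.id_apply]
  let N₀ : Submodule R D := LinearMap.range (DirectSum.lof R ℕ (fun _ => Sfix) 0)
  have hN₀ : N₀ ≠ ⊥ := by
    intro hbot
    obtain ⟨y, hy⟩ := exists_ne (0 : Sfix)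
    have hmem : DirectSum.lof R ℕ (fun _ => Sfix) 0 y ∈ N₀ := ⟨y, rfl⟩
    rw [hbot, Submodule.mem_bot] at hmem
    exact hy (DirectSum.of_injective (β := fun _ : ℕ => Sfix) 0
      (by rw [← DirectSum.lof_eq_of R, hmem, ← DirectSum.lof_eq_of R, map_zero]))
  have hDinj : Function.Injective (N₀.mkQ.comp sh) := by
    rw [← LinearMap.ker_eq_bot, LinearMap.ker_comp, Submodule.ker_mkQ, eq_bot_iff]
    intro x hx
    obtain ⟨y, hy⟩ := Submodule.mem_comap.mp hx
    rw [Submodule.mem_bot, ← hls x, ← hy, hunsh0]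
  let N₁ : Submodule R (M ⧸ N) := N₀.comap (eqv : (M ⧸ N) →ₗ[R] D)
  have hmapN₁ : N₁.map (eqv : (M ⧸ N) →ₗ[R] D) = N₀ := by
    rw [Submodule.map_comap_eq, LinearEquiv.range, top_inf_eq]
  have hN₁ : N₁ ≠ ⊥ := fun h => hN₀ (by rw [← hmapN₁, h, Submodule.map_bot])
  let qiso : ((M ⧸ N) ⧸ N₁) ≃ₗ[R] (D ⧸ N₀) := Submodule.Quotient.equiv N₁ N₀ eqv hmapN₁
  let fM : (M ⧸ N) →ₗ[R] ((M ⧸ N) ⧸ N₁) :=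
    (qiso.symm.toLinearMap.comp (N₀.mkQ.comp sh)).comp (eqv : (M ⧸ N) →ₗ[R] D)
  have hfM : Function.Injective fM := by
    intro a b hab
    apply eqv.injective
    apply hDinj
    apply qiso.symm.injective
    simpa [fM, LinearMap.comp_apply] using hab
  constructor
  · exact ⟨ModuleCat.of R Sfix, N, hSfix_simple, ⟨eqv⟩⟩
  · intro hSB
    exact hN₁ (hSB N N₁ ⟨fM, hfM⟩)
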